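/- Let K_1, …, K_Q be real symmetric n×n matrices, Y a real symmetric positive definite n×n matrix, D a parameter set, and θ_q : D → ℝ for q = 1, …, Q; set K(μ) = Σ_{q=1}^{Q} θ_q(μ) K_q and α(μ) = inf over nonzero w ∈ ℝⁿ of wᵀK(μ)w / (wᵀYw). For each q let y_{q,min} = inf over nonzero w of wᵀK_qw/(wᵀYw) and y_{q,max} = sup over nonzero w of wᵀK_qw/(wᵀYw). Then (i) for every nonzero w ∈ ℝⁿ the vector y(w) ∈ ℝ^Q with components y_q(w) = wᵀK_qw/(wᵀYw) satisfies y_{q,min} ≤ y_q(w) ≤ y_{q,max} for all q and Σ_q θ_q(μ') y_q(w) ≥ α(μ') for every μ' ∈ D; and consequently (ii) for every μ ∈ D and every finite subset C ⊆ D, the successive constraint method lower bound α_LB(μ) = inf{ Σ_q θ_q(μ) y_q : y ∈ ℝ^Q, y_{q,min} ≤ y_q ≤ y_{q,max} for all q, and Σ_q θ_q(μ') y_q ≥ α(μ') for all μ' ∈ C } satisfies α_LB(μ) ≤ α(μ). -/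

import Mathlib

open scoped Matrix

private lemma scm_den_pos {n : ℕ} {Y : Matrix (Fin n) (Fin n) ℝ} (hY : Y.PosDef)
    {w : Fin n → ℝ} (hw : w ≠ 0) : 0 < w ⬝ᵥ Y.mulVec w := by
  simpa using hY.dotProduct_mulVec_pos hw

private lemma scm_cont {n : ℕ} (A : Matrix (Fin n) (Fin n) ℝ) :
    Continuous fun w : Fin n → ℝ => w ⬝ᵥ A.mulVec w := by
  simp only [dotProduct, Matrix.mulVec]
  fun_prop

private lemma scm_scale {n : ℕ} (A Y : Matrix (Fin n) (Fin n) ℝ)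
    (w : Fin n → ℝ) {c : ℝ} (hc : c ≠ 0) :
    ((c • w) ⬝ᵥ A.mulVec (c • w)) / ((c • w) ⬝ᵥ Y.mulVec (c • w))
      = (w ⬝ᵥ A.mulVec w) / (w ⬝ᵥ Y.mulVec w) := by
  simp only [Matrix.mulVec_smul, smul_dotProduct, dotProduct_smul,
    smul_eq_mul]
  rw [mul_div_mul_left _ _ hc, mul_div_mul_left _ _ hc]

/-- The Rayleigh-quotient set equals the image of the unit sphere. -/
private lemma scm_set_eq {n : ℕ} (hn : 0 < n) (A Y : Matrix (Fin n) (Fin n) ℝ)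
    (hY : Y.PosDef) :
    {r : ℝ | ∃ w : Fin n → ℝ, w ≠ 0 ∧
        r = (w ⬝ᵥ A.mulVec w) / (w ⬝ᵥ Y.mulVec w)}
      = (fun w : Fin n → ℝ => (w ⬝ᵥ A.mulVec w) / (w ⬝ᵥ Y.mulVec w)) ''
          Metric.sphere 0 1 := by
  ext r
  constructor
  · rintro ⟨w, hw, rfl⟩
    have hnw : ‖w‖ ≠ 0 := norm_ne_zero_iff.mpr hw
    refine ⟨‖w‖⁻¹ • w, ?_, ?_⟩
    · simp [mem_sphere_zero_iff_norm, norm_smul, abs_of_nonneg, inv_mul_cancel₀ hnw]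
    · exact scm_scale A Y w (inv_ne_zero hnw)
  · rintro ⟨u, hu, rfl⟩
    have : u ≠ 0 := by
      intro h
      rw [mem_sphere_zero_iff_norm] at hu
      simp [h] at hu
    exact ⟨u, this, rfl⟩

private lemma scm_bdd {n : ℕ} (hn : 0 < n) (A Y : Matrix (Fin n) (Fin n) ℝ)
    (hY : Y.PosDef) :
    ({r : ℝ | ∃ w : Fin n → ℝ, w ≠ 0 ∧
        r = (w ⬝ᵥ A.mulVec w) / (w ⬝ᵥ Y.mulVec w)}).Nonempty ∧
    BddBelow {r : ℝ | ∃ w : Fin n → ℝ, w ≠ 0 ∧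
        r = (w ⬝ᵥ A.mulVec w) / (w ⬝ᵥ Y.mulVec w)} ∧
    BddAbove {r : ℝ | ∃ w : Fin n → ℝ, w ≠ 0 ∧
        r = (w ⬝ᵥ A.mulVec w) / (w ⬝ᵥ Y.mulVec w)} := by
  have hw0 : (Pi.single (⟨0, hn⟩ : Fin n) (1 : ℝ) : Fin n → ℝ) ≠ 0 := by
    intro h
    have := congrFun h ⟨0, hn⟩
    simp at this
  refine ⟨⟨_, _, hw0, rfl⟩, ?_, ?_⟩ <;>
  · rw [scm_set_eq hn A Y hY]
    have hc : IsCompact ((fun w : Fin n → ℝ =>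
        (w ⬝ᵥ A.mulVec w) / (w ⬝ᵥ Y.mulVec w)) '' Metric.sphere 0 1) := by
      apply (isCompact_sphere (0 : Fin n → ℝ) 1).image_of_continuousOn
      apply ContinuousOn.div (scm_cont A).continuousOn (scm_cont Y).continuousOn
      intro u hu
      have : u ≠ 0 := by
        intro h
        rw [mem_sphere_zero_iff_norm] at hu
        simp [h] at hu
      exact (scm_den_pos hY this).ne'
    first
      | exact hc.bddBelow
      | exact hc.bddAbove

private lemma scm_lin {n Q : ℕ} (K : Fin Q → Matrix (Fin n) (Fin n) ℝ)
    (c : Fin Q → ℝ) (w : Fin n → ℝ) (d : ℝ) :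
    (w ⬝ᵥ (∑ q, c q • K q).mulVec w) / d
      = ∑ q, c q * ((w ⬝ᵥ (K q).mulVec w) / d) := by
  have h : w ⬝ᵥ (∑ q, c q • K q).mulVec w
      = ∑ q, c q * (w ⬝ᵥ (K q).mulVec w) := by
    have : (∑ q, c q • K q).mulVec w = ∑ q, c q • (K q).mulVec w := by
      induction (Finset.univ : Finset (Fin Q)) using Finset.induction with
      | empty => simp [Matrix.zero_mulVec]
      | insert a s h ih => simp [Finset.sum_insert h, Matrix.add_mulVec, ih,
          Matrix.smul_mulVec]
    rw [this]
    simp only [dotProduct, Finset.sum_apply, Pi.smul_apply, smul_eq_mul,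
      Finset.mul_sum]
    rw [Finset.sum_comm]
    refine Finset.sum_congr rfl fun q _ => Finset.sum_congr rfl fun i _ => by ring
  rw [h, Finset.sum_div]
  simp [mul_div_assoc]

/-- The successive constraint method lower bound is a true lower bound for the
discrete coercivity constant: (i) every nonzero `w` produces a feasible point
`y(w)` of the SCM linear program, and (ii) consequently
`α_LB(μ) ≤ α(μ)` for every parameter `μ` and finite constraint sample `C`. -/
theorem scm_lower_bound
    {n Q : ℕ} (hn : 0 < n) {D : Type*}
    (K : Fin Q → Matrix (Fin n) (Fin n) ℝ) (hK : ∀ q, (K q).IsSymm)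
    (Y : Matrix (Fin n) (Fin n) ℝ) (hY : Y.PosDef)
    (θ : Fin Q → D → ℝ)
    (αfun : D → ℝ)
    (hαfun : ∀ μ : D, αfun μ =
      sInf {r : ℝ | ∃ w : Fin n → ℝ, w ≠ 0 ∧
        r = (w ⬝ᵥ (∑ q, θ q μ • K q).mulVec w) / (w ⬝ᵥ Y.mulVec w)})
    (ymin ymax : Fin Q → ℝ)
    (hymin : ∀ q, ymin q = sInf {r : ℝ | ∃ w : Fin n → ℝ, w ≠ 0 ∧
        r = (w ⬝ᵥ (K q).mulVec w) / (w ⬝ᵥ Y.mulVec w)})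
    (hymax : ∀ q, ymax q = sSup {r : ℝ | ∃ w : Fin n → ℝ, w ≠ 0 ∧
        r = (w ⬝ᵥ (K q).mulVec w) / (w ⬝ᵥ Y.mulVec w)}) :
    (∀ w : Fin n → ℝ, w ≠ 0 →
      (∀ q, ymin q ≤ (w ⬝ᵥ (K q).mulVec w) / (w ⬝ᵥ Y.mulVec w) ∧
            (w ⬝ᵥ (K q).mulVec w) / (w ⬝ᵥ Y.mulVec w) ≤ ymax q) ∧
      (∀ μ' : D, αfun μ' ≤
        ∑ q, θ q μ' * ((w ⬝ᵥ (K q).mulVec w) / (w ⬝ᵥ Y.mulVec w)))) ∧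
    (∀ (μ : D) (C : Finset D),
      sInf {s : ℝ | ∃ y : Fin Q → ℝ,
          (∀ q, ymin q ≤ y q ∧ y q ≤ ymax q) ∧
          (∀ μ' ∈ C, αfun μ' ≤ ∑ q, θ q μ' * y q) ∧
          s = ∑ q, θ q μ * y q} ≤ αfun μ) := by
  have part1 : ∀ w : Fin n → ℝ, w ≠ 0 →
      (∀ q, ymin q ≤ (w ⬝ᵥ (K q).mulVec w) / (w ⬝ᵥ Y.mulVec w) ∧
            (w ⬝ᵥ (K q).mulVec w) / (w ⬝ᵥ Y.mulVec w) ≤ ymax q) ∧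
      (∀ μ' : D, αfun μ' ≤
        ∑ q, θ q μ' * ((w ⬝ᵥ (K q).mulVec w) / (w ⬝ᵥ Y.mulVec w))) := by
    intro w hw
    constructor
    · intro q
      obtain ⟨-, hbb, hba⟩ := scm_bdd hn (K q) Y hY
      constructor
      · rw [hymin q]; exact csInf_le hbb ⟨w, hw, rfl⟩
      · rw [hymax q]; exact le_csSup hba ⟨w, hw, rfl⟩
    · intro μ'
      obtain ⟨-, hbb, -⟩ := scm_bdd hn (∑ q, θ q μ' • K q) Y hY
      rw [hαfun μ', ← scm_lin K (fun q => θ q μ') w (w ⬝ᵥ Y.mulVec w)]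
      exact csInf_le hbb ⟨w, hw, rfl⟩
  refine ⟨part1, ?_⟩
  intro μ C
  set T : Set ℝ := {s : ℝ | ∃ y : Fin Q → ℝ,
      (∀ q, ymin q ≤ y q ∧ y q ≤ ymax q) ∧
      (∀ μ' ∈ C, αfun μ' ≤ ∑ q, θ q μ' * y q) ∧
      s = ∑ q, θ q μ * y q} with hT
  have hTbdd : BddBelow T := by
    refine ⟨∑ q, min (θ q μ * ymin q) (θ q μ * ymax q), ?_⟩
    rintro s ⟨y, hy, -, rfl⟩
    refine Finset.sum_le_sum fun q _ => ?_
    rcases le_or_gt 0 (θ q μ) with h | h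
    · exact le_trans (min_le_left _ _) (mul_le_mul_of_nonneg_left (hy q).1 h)
    · exact le_trans (min_le_right _ _)
        (mul_le_mul_of_nonpos_left (hy q).2 h.le)
  rw [hαfun μ]
  obtain ⟨hne, -, -⟩ := scm_bdd hn (∑ q, θ q μ • K q) Y hY
  refine le_csInf hne ?_
  rintro r ⟨w, hw, rfl⟩
  rw [scm_lin K (fun q => θ q μ) w (w ⬝ᵥ Y.mulVec w)]
  exact csInf_le hTbdd ⟨fun q => (w ⬝ᵥ (K q).mulVec w) / (w ⬝ᵥ Y.mulVec w),
    (part1 w hw).1, fun μ' _ => (part1 w hw).2 μ', rfl⟩
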